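/- Let d, gX, gY, r be integers with d ≥ 3, gX ≥ 5, gY ≥ 1, and r ≥ 1, and set b = (2·gX − 2) − d·(2·gY − 2). Suppose that, as rational numbers, either d·r ≤ b·r/4 or d·r ≤ (b − 2)·r/(2·gX − 4) + r. Then 4·d ≤ b. -/

import Mathlib

/-- Numerical core of Proposition 4.5 (bound-final-form), proving Proposition D: the two
cases of Mercat's Clifford-type theorem applied to an `f`-Ulrich bundle of rank `r` force
`4d ≤ b`. -/
theorem ulrich_branch_bound (d gX gY r b : ℤ) (hd : 3 ≤ d) (hgX : 5 ≤ gX) (hgY : 1 ≤ gY)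
    (hr : 1 ≤ r) (hb : b = (2 * gX - 2) - d * (2 * gY - 2))
    (hmercat : ((d : ℚ) * r ≤ (b : ℚ) * r / 4) ∨
      ((d : ℚ) * r ≤ ((b : ℚ) - 2) * r / (2 * (gX : ℚ) - 4) + r)) :
    4 * d ≤ b := by
  have hrq : (1:ℚ) ≤ (r:ℚ) := by exact_mod_cast hr
  have hdq : (3:ℚ) ≤ (d:ℚ) := by exact_mod_cast hd
  have hgq : (5:ℚ) ≤ (gX:ℚ) := by exact_mod_cast hgX
  have hgyq : (1:ℚ) ≤ (gY:ℚ) := by exact_mod_cast hgY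
  have hbq : (b:ℚ) = (2 * gX - 2) - d * (2 * gY - 2) := by exact_mod_cast hb
  rcases hmercat with h | h
  · have : (4:ℚ) * d ≤ b := by
      rw [le_div_iff₀ (by norm_num : (0:ℚ) < 4)] at h
      nlinarith
    exact_mod_cast this
  · have hg : (0:ℚ) < 2 * (gX:ℚ) - 4 := by linarith
    have h2 : (d:ℚ) * r - r ≤ ((b:ℚ) - 2) * r / (2 * (gX:ℚ) - 4) := by linarith
    rw [le_div_iff₀ hg] at h2
    exfalso
    have hrpos : (0:ℚ) < r := by linarith
    have h3 : ((d:ℚ) - 1) * (2 * (gX:ℚ) - 4) ≤ (b:ℚ) - 2 := by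
      rw [← mul_le_mul_iff_of_pos_right hrpos]
      nlinarith [h2]
    nlinarith [h3, mul_nonneg (show (0:ℚ) ≤ (d:ℚ) by linarith)
      (show (0:ℚ) ≤ 2 * (gY:ℚ) - 2 by linarith)]
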